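/- arXiv:1804.04310 — 4 statements merged into one kernel-verified Lean document; each statement's English description precedes it below -/
import Mathlib

section
/- The matrix H with H_{αβ} = ⟨w_α, w_β⟩ is symmetric and positive definite, and its minimum eigenvalue is at least 1. -/
open Matrix

noncomputable def edgBasisMatrix {n : ℕ} (α : Fin n × Fin n) : Matrix (Fin n) (Fin n) ℝ :=
  Matrix.single α.1 α.1 1 + Matrix.single α.2 α.2 1
    - Matrix.single α.1 α.2 1 - Matrix.single α.2 α.1 1

noncomputable def edgH (n : ℕ) :
    Matrix {p : Fin n × Fin n // p.1 < p.2} {p : Fin n × Fin n // p.1 < p.2} ℝ :=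
  fun α β => Matrix.trace ((edgBasisMatrix α.val)ᵀ * edgBasisMatrix β.val)

private lemma edg_swap4 {E I : Type*} [Fintype E] [Fintype I] (f : E → E → I → I → ℝ) :
    ∑ a : E, ∑ b : E, ∑ i : I, ∑ j : I, f a b i j
      = ∑ i : I, ∑ j : I, ∑ a : E, ∑ b : E, f a b i j := by
  calc ∑ a : E, ∑ b : E, ∑ i : I, ∑ j : I, f a b i j
      = ∑ a : E, ∑ i : I, ∑ b : E, ∑ j : I, f a b i j :=
        Finset.sum_congr rfl fun a _ => Finset.sum_comm
    _ = ∑ i : I, ∑ a : E, ∑ b : E, ∑ j : I, f a b i j := Finset.sum_comm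
    _ = ∑ i : I, ∑ a : E, ∑ j : I, ∑ b : E, f a b i j :=
        Finset.sum_congr rfl fun i _ => Finset.sum_congr rfl fun a _ => Finset.sum_comm
    _ = ∑ i : I, ∑ j : I, ∑ a : E, ∑ b : E, f a b i j :=
        Finset.sum_congr rfl fun i _ => Finset.sum_comm

private lemma edg_quadform_eq (n : ℕ) (v : {p : Fin n × Fin n // p.1 < p.2} → ℝ) :
    v ⬝ᵥ (edgH n) *ᵥ v
      = ∑ i, ∑ j, ((∑ α, v α • edgBasisMatrix α.val) i j) ^ 2 := by
  simp only [dotProduct, mulVec, edgH, Matrix.trace, Matrix.diag, mul_apply,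
    transpose_apply, Finset.mul_sum, Finset.sum_mul, Matrix.sum_apply,
    Matrix.smul_apply, smul_eq_mul, pow_two]
  rw [edg_swap4]
  rw [Finset.sum_comm]
  refine Finset.sum_congr rfl fun i _ => Finset.sum_congr rfl fun j _ =>
    Finset.sum_congr rfl fun a _ => Finset.sum_congr rfl fun b _ => ?_
  ring

private lemma edg_entry_eq (n : ℕ) (v : {p : Fin n × Fin n // p.1 < p.2} → ℝ)
    (α : {p : Fin n × Fin n // p.1 < p.2}) :
    (∑ β, v β • edgBasisMatrix β.val) α.val.1 α.val.2 = - v α := by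
  obtain ⟨⟨i, j⟩, hij⟩ := α
  simp only [Matrix.sum_apply, Matrix.smul_apply, smul_eq_mul]
  rw [Finset.sum_eq_single ⟨(i, j), hij⟩]
  · have : i ≠ j := hij.ne
    simp [edgBasisMatrix, Matrix.single, Matrix.of_apply, this, this.symm]
  · rintro ⟨⟨a, b⟩, hab⟩ _ hne
    have h1 : ¬(a = i ∧ b = j) := by
      intro ⟨h, h'⟩; exact hne (by simp [h, h'])
    have : a ≠ b := hab.ne
    have h2 : ¬(b = i ∧ a = j) := by
      intro ⟨h, h'⟩; subst h; subst h'; exact absurd hab (not_lt.2 hij.le)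
    simp only [edgBasisMatrix, Matrix.single, Matrix.of_apply]
    simp only [Matrix.sub_apply, Matrix.add_apply, Matrix.of_apply]
    have hij' : i ≠ j := hij.ne
    split_ifs <;> first | (exfalso; omega) | ring
  · intro h; exact absurd (Finset.mem_univ _) h

private lemma edg_quad_ge (n : ℕ) (v : {p : Fin n × Fin n // p.1 < p.2} → ℝ) :
    v ⬝ᵥ v ≤ v ⬝ᵥ (edgH n) *ᵥ v := by
  rw [edg_quadform_eq]
  have h1 : v ⬝ᵥ v = ∑ α, (v α) ^ 2 := by simp [dotProduct, pow_two]
  rw [h1, ← Fintype.sum_prod_type']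
  have h2 : ∑ α : {p : Fin n × Fin n // p.1 < p.2}, (v α) ^ 2
      = ∑ p ∈ Finset.univ.filter (fun p : Fin n × Fin n => p.1 < p.2),
          ((∑ α, v α • edgBasisMatrix (n := n) α.val) p.1 p.2) ^ 2 := by
    rw [Finset.sum_subtype (p := fun p : Fin n × Fin n => p.1 < p.2)
      (Finset.univ.filter fun p : Fin n × Fin n => p.1 < p.2)
      (fun p => by simp)
      (fun p : Fin n × Fin n => ((∑ α, v α • edgBasisMatrix (n := n) α.val) p.1 p.2) ^ 2)]
    refine Finset.sum_congr rfl fun α _ => ?_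
    rw [edg_entry_eq n v α]
    ring
  rw [h2]
  refine Finset.sum_le_sum_of_subset_of_nonneg (Finset.filter_subset _ _) ?_
  intro p _ _
  positivity

private lemma edg_posdef_shift (n : ℕ) (μ : ℝ) (hμ : μ < 1) :
    (edgH n - μ • 1).PosDef := by
  have hsymm : (edgH n).IsSymm := by
    ext α β
    show edgH n β α = edgH n α β
    unfold edgH
    rw [← Matrix.trace_transpose, Matrix.transpose_mul, Matrix.transpose_transpose]
  rw [posDef_iff_dotProduct_mulVec]
  constructor
  · show (edgH n - μ • 1)ᴴ = _
    have : (edgH n - μ • 1)ᴴ = (edgH n - μ • 1)ᵀ := by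
      ext i j; simp [conjTranspose_apply]
    rw [this, Matrix.transpose_sub, hsymm.eq]
    congr 1
    simp [Matrix.transpose_smul]
  · intro x hx
    have hstar : star x = x := by ext i; simp
    rw [hstar, Matrix.sub_mulVec, dotProduct_sub, Matrix.smul_mulVec,
      Matrix.one_mulVec, dotProduct_smul, smul_eq_mul]
    have hnn : 0 ≤ x ⬝ᵥ x := by
      refine Finset.sum_nonneg fun i _ => mul_self_nonneg _
    have hxx : 0 < x ⬝ᵥ x := by
      rcases lt_or_eq_of_le hnn with h | h
      · exact h
      · exact absurd ((dotProduct_self_eq_zero).mp h.symm) hx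
    have := edg_quad_ge n x
    nlinarith

/-- `H` is symmetric, positive definite, and its minimum eigenvalue is at least `1`. -/
theorem edg_H_posdef (n : ℕ) :
    (edgH n).IsSymm ∧ (edgH n).PosDef ∧ ∀ μ ∈ spectrum ℝ (edgH n), (1 : ℝ) ≤ μ := by
  refine ⟨?_, ?_, ?_⟩
  · ext α β
    show edgH n β α = edgH n α β
    unfold edgH
    rw [← Matrix.trace_transpose, Matrix.transpose_mul, Matrix.transpose_transpose]
  · have h := edg_posdef_shift n 0 one_pos
    simpa using h
  · intro μ hμ
    by_contra hlt
    push_neg at hlt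
    have hpd := edg_posdef_shift n μ hlt
    have hdet : IsUnit (edgH n - μ • 1) :=
      (Matrix.isUnit_iff_isUnit_det _).mpr hpd.det_pos.ne'.isUnit
    have : ¬IsUnit ((algebraMap ℝ _) μ - edgH n) := spectrum.mem_iff.mp hμ
    apply this
    have halg : (algebraMap ℝ (Matrix {p : Fin n × Fin n // p.1 < p.2}
        {p : Fin n × Fin n // p.1 < p.2} ℝ)) μ = μ • 1 := by
      rw [Algebra.algebraMap_eq_smul_one]
    rw [halg, show μ • (1 : Matrix _ _ ℝ) - edgH n = -(edgH n - μ • 1) by abel]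
    exact hdet.neg
end

section
/- The inverse of H has explicit entries: H^{-1}_{αβ} equals ((n-1)²+1)/(2n²) if α = β; 1/n² if {α₁,α₂} and {β₁,β₂} are disjoint; and (4-2n)/(4n²) if they share exactly one index. -/
open Matrix

/-- The explicit candidate for `H⁻¹`: `((n-1)²+1)/(2n²)` on the diagonal, `1/n²` when the
index sets are disjoint, and `(4-2n)/(4n²)` when they share exactly one index. -/
noncomputable def edgHinv (n : ℕ) :
    Matrix {p : Fin n × Fin n // p.1 < p.2} {p : Fin n × Fin n // p.1 < p.2} ℝ :=
  fun α β =>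
    if α = β then (((n : ℝ) - 1) ^ 2 + 1) / (2 * (n : ℝ) ^ 2)
    else if α.val.1 ≠ β.val.1 ∧ α.val.1 ≠ β.val.2 ∧ α.val.2 ≠ β.val.1 ∧ α.val.2 ≠ β.val.2
      then 1 / (n : ℝ) ^ 2
    else (4 - 2 * (n : ℝ)) / (4 * (n : ℝ) ^ 2)

namespace EDGAux

/-- The entrywise `0/1` incidence matrix of pairs versus points. -/
noncomputable def NN (n : ℕ) : Matrix {p : Fin n × Fin n // p.1 < p.2} (Fin n) ℝ :=
  fun γ k => (if γ.val.1 = k then 1 else 0) + (if γ.val.2 = k then 1 else 0)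

/-- The all-ones matrix on pairs. -/
noncomputable def Jm (n : ℕ) :
    Matrix {p : Fin n × Fin n // p.1 < p.2} {p : Fin n × Fin n // p.1 < p.2} ℝ :=
  fun _ _ => 1

/-- The all-ones matrix on points. -/
noncomputable def Jn (n : ℕ) : Matrix (Fin n) (Fin n) ℝ := fun _ _ => 1

def uvec {n : ℕ} (p : Fin n × Fin n) (k : Fin n) : ℝ :=
  (if p.1 = k then 1 else 0) - (if p.2 = k then 1 else 0)

lemma collapse {n : ℕ} (x y : Fin n) :
    ∑ k : Fin n, (if x = k then (1:ℝ) else 0) * (if y = k then 1 else 0)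
      = if x = y then 1 else 0 := by
  simp_rw [ite_mul, one_mul, zero_mul]
  rw [Finset.sum_ite_eq Finset.univ x (fun k => if y = k then (1:ℝ) else 0)]
  simp [eq_comm]

lemma NNT_apply {n : ℕ} (α β : {p : Fin n × Fin n // p.1 < p.2}) :
    (NN n * (NN n)ᵀ) α β =
      (if α.val.1 = β.val.1 then (1:ℝ) else 0) + (if α.val.1 = β.val.2 then 1 else 0)
      + (if α.val.2 = β.val.1 then 1 else 0) + (if α.val.2 = β.val.2 then 1 else 0) := by
  simp only [Matrix.mul_apply, Matrix.transpose_apply, NN]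
  have h : ∀ k : Fin n,
      ((if α.val.1 = k then (1:ℝ) else 0) + (if α.val.2 = k then 1 else 0)) *
      ((if β.val.1 = k then (1:ℝ) else 0) + (if β.val.2 = k then 1 else 0)) =
      (if α.val.1 = k then (1:ℝ) else 0) * (if β.val.1 = k then 1 else 0)
      + (if α.val.1 = k then (1:ℝ) else 0) * (if β.val.2 = k then 1 else 0)
      + (if α.val.2 = k then (1:ℝ) else 0) * (if β.val.1 = k then 1 else 0)
      + (if α.val.2 = k then (1:ℝ) else 0) * (if β.val.2 = k then 1 else 0) := by
    intro k; ring
  simp_rw [h, Finset.sum_add_distrib, collapse]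

lemma key {n : ℕ} (a1 a2 b1 b2 : Fin n) (ha : a1 < a2) (hb : b1 < b2) :
    ((if a1 = b1 then (1:ℝ) else 0) - (if a1 = b2 then 1 else 0)
      - (if a2 = b1 then 1 else 0) + (if a2 = b2 then 1 else 0)) ^ 2
    = 2 * (if a1 = b1 ∧ a2 = b2 then (1:ℝ) else 0)
      + ((if a1 = b1 then (1:ℝ) else 0) + (if a1 = b2 then 1 else 0)
        + (if a2 = b1 then 1 else 0) + (if a2 = b2 then 1 else 0)) := by
  split_ifs <;>
    first
      | (norm_num; done)
      | (exfalso; simp only [Fin.ext_iff, Fin.lt_def] at *; omega)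

lemma hS {n : ℕ} (p q : Fin n × Fin n) :
    ∑ k : Fin n, uvec p k * uvec q k =
      (if p.1 = q.1 then (1:ℝ) else 0) - (if p.1 = q.2 then 1 else 0)
        - (if p.2 = q.1 then 1 else 0) + (if p.2 = q.2 then 1 else 0) := by
  have h : ∀ k : Fin n, uvec p k * uvec q k =
      (if p.1 = k then (1:ℝ) else 0) * (if q.1 = k then 1 else 0)
      - (if p.1 = k then (1:ℝ) else 0) * (if q.2 = k then 1 else 0)
      - (if p.2 = k then (1:ℝ) else 0) * (if q.1 = k then 1 else 0)
      + (if p.2 = k then (1:ℝ) else 0) * (if q.2 = k then 1 else 0) := by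
    intro k; simp only [uvec]; ring
  simp_rw [h, Finset.sum_add_distrib, Finset.sum_sub_distrib, collapse]

lemma wfact {n : ℕ} (p : Fin n × Fin n) (a b : Fin n) :
    edgBasisMatrix p a b = uvec p a * uvec p b := by
  simp only [edgBasisMatrix, Matrix.single, uvec, Matrix.sub_apply, Matrix.add_apply,
    Matrix.of_apply]
  by_cases h1 : p.1 = a <;> by_cases h2 : p.2 = a <;> by_cases h3 : p.1 = b <;>
    by_cases h4 : p.2 = b <;> by_cases h5 : a = b <;>
    simp [h1, h2, h3, h4, h5]

lemma edgH_eq {n : ℕ} (α β : {p : Fin n × Fin n // p.1 < p.2}) :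
    edgH n α β = (∑ k : Fin n, uvec α.val k * uvec β.val k) ^ 2 := by
  simp only [edgH, Matrix.trace, Matrix.diag, Matrix.mul_apply, Matrix.transpose_apply, wfact]
  rw [sq, Finset.sum_mul_sum]
  rw [Finset.sum_comm]
  congr 1; ext i; congr 1; ext j; ring

lemma edgH_entry {n : ℕ} (α β : {p : Fin n × Fin n // p.1 < p.2}) :
    edgH n α β = 2 * (if α = β then (1:ℝ) else 0) + (NN n * (NN n)ᵀ) α β := by
  rw [edgH_eq, hS, NNT_apply]
  have hiff : (α = β) ↔ (α.val.1 = β.val.1 ∧ α.val.2 = β.val.2) := by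
    rw [Subtype.ext_iff, Prod.ext_iff]
  rw [if_congr hiff rfl rfl]
  exact key _ _ _ _ α.prop β.prop

lemma hH (n : ℕ) :
    edgH n = (2:ℝ) • (1 : Matrix {p : Fin n × Fin n // p.1 < p.2}
        {p : Fin n × Fin n // p.1 < p.2} ℝ) + NN n * (NN n)ᵀ := by
  ext α β
  rw [edgH_entry]
  simp only [Matrix.add_apply, Matrix.smul_apply, Matrix.one_apply, smul_eq_mul]

set_option maxHeartbeats 1000000 in
lemma hHinv (n : ℕ) (hn : 2 ≤ n) :
    edgHinv n = (1/2 : ℝ) • (1 : Matrix {p : Fin n × Fin n // p.1 < p.2}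
        {p : Fin n × Fin n // p.1 < p.2} ℝ)
      + (-(1/(2*(n:ℝ)))) • (NN n * (NN n)ᵀ) + (1/(n:ℝ)^2) • Jm n := by
  have h0 : (n:ℝ) ≠ 0 := Nat.cast_ne_zero.mpr (by omega)
  ext α β
  obtain ⟨⟨a1, a2⟩, ha⟩ := α
  obtain ⟨⟨b1, b2⟩, hb⟩ := β
  simp only [edgHinv, NNT_apply, Jm, Matrix.add_apply, Matrix.smul_apply, Matrix.one_apply,
    smul_eq_mul, Subtype.mk.injEq, Prod.mk.injEq, ne_eq, mul_one]
  split_ifs <;>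
    first
      | (exfalso; simp only [Fin.ext_iff, Fin.lt_def] at *; omega)
      | (field_simp; ring)
      | (norm_num; done)

lemma sum_subtype_lt {n : ℕ} (f : Fin n × Fin n → ℝ) :
    ∑ γ : {p : Fin n × Fin n // p.1 < p.2}, f γ.val
      = ∑ a : Fin n, ∑ b : Fin n, if a < b then f (a, b) else 0 := by
  rw [← Finset.sum_subtype (Finset.univ.filter fun p : Fin n × Fin n => p.1 < p.2)
      (by simp) f]
  rw [Finset.sum_filter, Fintype.sum_prod_type]

lemma fin_sum_gt {n : ℕ} (i : Fin n) :
    ∑ b : Fin n, (if i < b then (1:ℝ) else 0) = ((n - ((i:ℕ)+1) : ℕ) : ℝ) := by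
  rw [Finset.sum_boole]
  congr 1
  have h : Finset.univ.filter (fun b : Fin n => i < b) = Finset.Ioi i := by
    ext b; simp
  rw [h, Fin.card_Ioi]
  omega

lemma fin_sum_lt {n : ℕ} (i : Fin n) :
    ∑ b : Fin n, (if b < i then (1:ℝ) else 0) = ((i:ℕ) : ℝ) := by
  rw [Finset.sum_boole]
  congr 1
  have h : Finset.univ.filter (fun b : Fin n => b < i) = Finset.Iio i := by
    ext b; simp
  rw [h, Fin.card_Iio]

lemma colsum {n : ℕ} (i : Fin n) :
    ∑ γ : {p : Fin n × Fin n // p.1 < p.2}, NN n γ i = (n:ℝ) - 1 := by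
  have h0 := sum_subtype_lt (n := n)
    (fun p => (if p.1 = i then (1:ℝ) else 0) + (if p.2 = i then 1 else 0))
  rw [show (∑ γ : {p : Fin n × Fin n // p.1 < p.2}, NN n γ i) =
      ∑ γ : {p : Fin n × Fin n // p.1 < p.2},
        ((if γ.val.1 = i then (1:ℝ) else 0) + (if γ.val.2 = i then 1 else 0)) from rfl, h0]
  have step : ∀ a b : Fin n,
      (if a < b then ((if a = i then (1:ℝ) else 0) + (if b = i then 1 else 0)) else 0)
      = (if a = i then (if i < b then (1:ℝ) else 0) else 0)
        + (if b = i then (if a < i then (1:ℝ) else 0) else 0) := by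
    intro a b
    by_cases h1 : a = i <;> by_cases h2 : b = i <;>
      simp_all [lt_self_iff_false]
  simp_rw [step, Finset.sum_add_distrib]
  have e1 : ∀ a : Fin n, (∑ b : Fin n, if a = i then (if i < b then (1:ℝ) else 0) else 0)
      = if a = i then ((n - ((i:ℕ)+1) : ℕ) : ℝ) else 0 := by
    intro a
    by_cases h : a = i
    · simp only [h, if_true]; exact fin_sum_gt i
    · simp [h]
  have e2 : ∀ a : Fin n, (∑ b : Fin n, if b = i then (if a < i then (1:ℝ) else 0) else 0)
      = if a < i then (1:ℝ) else 0 := by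
    intro a
    rw [Finset.sum_ite_eq' Finset.univ i (fun _ => if a < i then (1:ℝ) else 0)]
    simp
  simp_rw [e1, e2]
  rw [Finset.sum_ite_eq' Finset.univ i (fun _ => ((n - ((i:ℕ)+1) : ℕ) : ℝ)), fin_sum_lt]
  simp only [Finset.mem_univ, if_true]
  have hle : (i:ℕ) + 1 ≤ n := i.isLt
  push_cast [Nat.cast_sub hle]
  ring

lemma rowsum {n : ℕ} (γ : {p : Fin n × Fin n // p.1 < p.2}) :
    ∑ k : Fin n, NN n γ k = 2 := by
  simp only [NN, Finset.sum_add_distrib]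
  rw [Finset.sum_ite_eq Finset.univ γ.val.1 (fun _ => (1:ℝ)),
    Finset.sum_ite_eq Finset.univ γ.val.2 (fun _ => (1:ℝ))]
  norm_num

lemma nn_sq {n : ℕ} (γ : {p : Fin n × Fin n // p.1 < p.2}) (k : Fin n) :
    NN n γ k * NN n γ k = NN n γ k := by
  simp only [NN]
  by_cases h1 : γ.val.1 = k <;> by_cases h2 : γ.val.2 = k
  · exact absurd (h1.trans h2.symm) γ.prop.ne
  all_goals simp [h1, h2]

lemma offdiag {n : ℕ} (i j : Fin n) (hij : i ≠ j) :
    ∑ γ : {p : Fin n × Fin n // p.1 < p.2}, NN n γ i * NN n γ j = 1 := by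
  have h0 := sum_subtype_lt (n := n)
    (fun p => ((if p.1 = i then (1:ℝ) else 0) + (if p.2 = i then 1 else 0))
      * ((if p.1 = j then (1:ℝ) else 0) + (if p.2 = j then 1 else 0)))
  rw [show (∑ γ : {p : Fin n × Fin n // p.1 < p.2}, NN n γ i * NN n γ j) =
      ∑ γ : {p : Fin n × Fin n // p.1 < p.2},
        (((if γ.val.1 = i then (1:ℝ) else 0) + (if γ.val.2 = i then 1 else 0))
          * ((if γ.val.1 = j then (1:ℝ) else 0) + (if γ.val.2 = j then 1 else 0)))
      from rfl, h0]
  have step : ∀ a b : Fin n,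
      (if a < b then (((if a = i then (1:ℝ) else 0) + (if b = i then 1 else 0))
          * ((if a = j then (1:ℝ) else 0) + (if b = j then 1 else 0))) else 0)
      = (if a = i then (if b = j then (if a < b then (1:ℝ) else 0) else 0) else 0)
        + (if a = j then (if b = i then (if a < b then (1:ℝ) else 0) else 0) else 0) := by
    intro a b
    by_cases h1 : a = i <;> by_cases h2 : b = i <;> by_cases h3 : a = j <;>
      by_cases h4 : b = j <;> simp_all [lt_self_iff_false]
  simp_rw [step, Finset.sum_add_distrib]
  have f1 : ∀ (x y : Fin n),
      (∑ a : Fin n, ∑ b : Fin n,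
        if a = x then (if b = y then (if a < b then (1:ℝ) else 0) else 0) else 0)
      = if x < y then (1:ℝ) else 0 := by
    intro x y
    have inner : ∀ a : Fin n,
        (∑ b : Fin n, if a = x then (if b = y then (if a < b then (1:ℝ) else 0) else 0) else 0)
        = if a = x then (if a < y then (1:ℝ) else 0) else 0 := by
      intro a
      by_cases h : a = x
      · simp only [h, if_true]
        rw [Finset.sum_ite_eq' Finset.univ y (fun b => if x < b then (1:ℝ) else 0)]
        simp
      · simp [h]
    simp_rw [inner]
    rw [Finset.sum_ite_eq' Finset.univ x (fun a => if a < y then (1:ℝ) else 0)]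
    simp
  rw [f1, f1]
  rcases hij.lt_or_gt with h | h
  · simp [h, asymm h]
  · simp [h, asymm h]

lemma hNtN (n : ℕ) : (NN n)ᵀ * NN n = ((n:ℝ)-2) • (1 : Matrix (Fin n) (Fin n) ℝ) + Jn n := by
  ext i j
  simp only [Matrix.mul_apply, Matrix.transpose_apply, Matrix.add_apply, Matrix.smul_apply,
    Matrix.one_apply, Jn, smul_eq_mul]
  by_cases h : i = j
  · subst h
    simp_rw [nn_sq]
    rw [colsum i]
    simp only [if_true]
    ring
  · rw [offdiag i j h]
    simp [h]

lemma NJN (n : ℕ) : NN n * Jn n * (NN n)ᵀ = (4:ℝ) • Jm n := by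
  ext α β
  simp only [Matrix.mul_apply, Matrix.transpose_apply, Jn, Jm, Matrix.smul_apply, smul_eq_mul,
    mul_one]
  rw [← Finset.mul_sum, rowsum, rowsum]
  norm_num

lemma e_AA (n : ℕ) :
    (NN n * (NN n)ᵀ) * (NN n * (NN n)ᵀ)
      = ((n:ℝ)-2) • (NN n * (NN n)ᵀ) + (4:ℝ) • Jm n := by
  have h1 : (NN n * (NN n)ᵀ) * (NN n * (NN n)ᵀ) = NN n * ((NN n)ᵀ * NN n) * (NN n)ᵀ := by
    rw [Matrix.mul_assoc, Matrix.mul_assoc, Matrix.mul_assoc]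
  rw [h1, hNtN n, Matrix.mul_add, Matrix.add_mul, Matrix.mul_smul, Matrix.mul_one,
    Matrix.smul_mul, NJN]

lemma e_AJ (n : ℕ) : (NN n * (NN n)ᵀ) * Jm n = (2*(n:ℝ)-2) • Jm n := by
  ext α β
  simp only [Matrix.mul_apply, Matrix.transpose_apply, Jm, Matrix.smul_apply, smul_eq_mul,
    mul_one]
  rw [Finset.sum_comm]
  simp_rw [← Finset.mul_sum, colsum]
  rw [← Finset.sum_mul, rowsum]
  ring

lemma e_JA (n : ℕ) : Jm n * (NN n * (NN n)ᵀ) = (2*(n:ℝ)-2) • Jm n := by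
  have hsym : (NN n * (NN n)ᵀ)ᵀ = NN n * (NN n)ᵀ := by
    rw [Matrix.transpose_mul, Matrix.transpose_transpose]
  have hJ : (Jm n)ᵀ = Jm n := rfl
  have h := congrArg Matrix.transpose (e_AJ n)
  rw [Matrix.transpose_mul, hsym, hJ, Matrix.transpose_smul, hJ] at h
  exact h

end EDGAux

open EDGAux in
/-- The matrix `edgHinv n` is indeed the inverse of `H`. -/
theorem edg_H_inverse (n : ℕ) (hn : 2 ≤ n) :
    edgH n * edgHinv n = 1 ∧ edgHinv n * edgH n = 1 := by
  have h0 : (n:ℝ) ≠ 0 := Nat.cast_ne_zero.mpr (by omega)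
  constructor
  · rw [hH n, hHinv n hn]
    simp only [Matrix.add_mul, Matrix.mul_add, Matrix.smul_mul, Matrix.mul_smul,
      Matrix.one_mul, Matrix.mul_one, smul_smul]
    rw [e_AA, e_AJ]
    match_scalars <;> field_simp <;> ring
  · rw [hH n, hHinv n hn]
    simp only [Matrix.add_mul, Matrix.mul_add, Matrix.smul_mul, Matrix.mul_smul,
      Matrix.one_mul, Matrix.mul_one, smul_smul]
    rw [e_AA, e_JA]
    match_scalars <;> field_simp <;> ring
end

section
/- For any symmetric matrix X with zero row sums, the sum over all pairs α of ⟨X, w_α⟩² satisfies ||X||_F² ≤ Σ_α ⟨X, w_α⟩² ≤ 2n||X||_F². -/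
open Matrix

lemma trace_transpose_mul_std {n : ℕ} (X : Matrix (Fin n) (Fin n) ℝ) (i j : Fin n) :
    Matrix.trace (Xᵀ * Matrix.single i j (1:ℝ)) = X i j := by
  simp [Matrix.trace, Matrix.diag, Matrix.mul_apply, Matrix.single, ite_and]

/-- For any symmetric `X` with zero row sums,
`‖X‖_F² ≤ Σ_α ⟨X, w_α⟩² ≤ 2n ‖X‖_F²`, summing over all pairs `α₁ < α₂`. -/
theorem edg_norm_equivalence {n : ℕ} (X : Matrix (Fin n) (Fin n) ℝ)
    (hsymm : X.IsSymm) (h1 : X *ᵥ (fun _ => (1 : ℝ)) = 0) :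
    (∑ i, ∑ j, X i j ^ 2) ≤
        (∑ α ∈ Finset.univ.filter (fun p : Fin n × Fin n => p.1 < p.2),
          Matrix.trace (Xᵀ * edgBasisMatrix α) ^ 2) ∧
      (∑ α ∈ Finset.univ.filter (fun p : Fin n × Fin n => p.1 < p.2),
          Matrix.trace (Xᵀ * edgBasisMatrix α) ^ 2) ≤
        2 * n * (∑ i, ∑ j, X i j ^ 2) := by
  rcases Nat.eq_zero_or_pos n with hn | hn
  · subst hn
    simp
  have hsym : ∀ i j, X j i = X i j := hsymm.apply
  have hrow : ∀ i, ∑ j, X i j = 0 := by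
    intro i
    have := congrFun h1 i
    simpa [Matrix.mulVec, dotProduct] using this
  have hcol : ∀ j, ∑ i, X i j = 0 := by
    intro j
    calc ∑ i, X i j = ∑ i, X j i := Finset.sum_congr rfl fun i _ => (hsym i j).symm
    _ = 0 := hrow j
  set g : Fin n × Fin n → ℝ := fun p => (X p.1 p.1 + X p.2 p.2 - 2 * X p.1 p.2) ^ 2 with hg
  have htr : ∀ p : Fin n × Fin n, Matrix.trace (Xᵀ * edgBasisMatrix p) ^ 2 = g p := by
    intro p
    simp only [edgBasisMatrix, Matrix.mul_add, Matrix.mul_sub, Matrix.trace_add,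
      Matrix.trace_sub, trace_transpose_mul_std, hsym p.1 p.2, hg]
    ring
  set d := ∑ i, X i i ^ 2 with hd
  set t := ∑ i, X i i with ht
  set F := ∑ i, ∑ j, X i j ^ 2 with hF
  set S := ∑ α ∈ Finset.univ.filter (fun p : Fin n × Fin n => p.1 < p.2),
    Matrix.trace (Xᵀ * edgBasisMatrix α) ^ 2 with hS
  have hSg : S = ∑ p ∈ Finset.univ.filter (fun p : Fin n × Fin n => p.1 < p.2), g p :=
    Finset.sum_congr rfl fun p _ => htr p
  -- the double sum equals twice S
  have hswap : ∑ p ∈ Finset.univ.filter (fun p : Fin n × Fin n => p.2 < p.1), g p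
      = ∑ p ∈ Finset.univ.filter (fun p : Fin n × Fin n => p.1 < p.2), g p := by
    refine Finset.sum_equiv (Equiv.prodComm (Fin n) (Fin n)) (fun p => by simp) ?_
    intro p _
    simp only [Equiv.prodComm_apply, Prod.fst_swap, Prod.snd_swap, hg]
    rw [hsym p.1 p.2]
    ring
  have hnot : ∑ p ∈ Finset.univ.filter (fun p : Fin n × Fin n => ¬ p.1 < p.2), g p
      = ∑ p ∈ Finset.univ.filter (fun p : Fin n × Fin n => p.2 < p.1), g p := by
    refine (Finset.sum_subset ?_ ?_).symm
    · intro p hp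
      simp only [Finset.mem_filter, Finset.mem_univ, true_and] at hp ⊢
      exact not_lt.2 hp.le
    · intro p hp hp2
      simp only [Finset.mem_filter, Finset.mem_univ, true_and] at hp hp2
      have : p.1 = p.2 := le_antisymm (not_lt.1 hp2) (not_lt.1 hp)
      simp only [hg, this]
      ring
  have hdouble : ∑ i, ∑ j, g (i, j) = 2 * S := by
    rw [← Finset.sum_product', Finset.univ_product_univ]
    simp only [Prod.mk.eta]
    rw [← Finset.sum_filter_add_sum_filter_not Finset.univ (fun p : Fin n × Fin n => p.1 < p.2) g]
    rw [hnot, hswap, hSg]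
    ring
  -- expand the double sum
  have hinner : ∀ i, ∑ j, g (i, j)
      = (n : ℝ) * X i i ^ 2 + d + 4 * (∑ j, X i j ^ 2) + 2 * X i i * t
        - 4 * (∑ j, X j j * X i j) := by
    intro i
    have expand : ∀ j, g (i, j) = X i i ^ 2 + X j j ^ 2 + 4 * X i j ^ 2
        + 2 * (X i i * X j j) - 4 * (X i i * X i j) - 4 * (X j j * X i j) := by
      intro j; simp only [hg]; ring
    rw [Finset.sum_congr rfl fun j _ => expand j]
    simp only [Finset.sum_sub_distrib, Finset.sum_add_distrib, ← Finset.mul_sum,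
      Finset.sum_const, Finset.card_univ, Fintype.card_fin, nsmul_eq_mul, hrow i, mul_zero]
    simp only [← hd, ← ht]
    ring
  have hcross : ∑ i, ∑ j, X j j * X i j = 0 := by
    rw [Finset.sum_comm]
    calc ∑ j, ∑ i, X j j * X i j = ∑ j, X j j * ∑ i, X i j := by
          simp_rw [Finset.mul_sum]
      _ = 0 := by simp [hcol]
  have hbig : ∑ i, ∑ j, g (i, j) = 2 * n * d + 4 * F + 2 * t ^ 2 := by
    rw [Finset.sum_congr rfl fun i _ => hinner i]
    simp only [Finset.sum_sub_distrib, Finset.sum_add_distrib, Finset.sum_const,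
      ← Finset.mul_sum, ← Finset.sum_mul, Finset.card_univ, Fintype.card_fin,
      nsmul_eq_mul, hcross, mul_zero]
    simp only [← hd, ← ht, ← hF]
    ring
  have hSval : S = n * d + 2 * F + t ^ 2 := by
    have := hdouble.symm.trans hbig
    linarith
  -- basic nonnegativity
  have hdpos : 0 ≤ d := Finset.sum_nonneg fun i _ => sq_nonneg _
  have hFpos : 0 ≤ F := Finset.sum_nonneg fun i _ => Finset.sum_nonneg fun j _ => sq_nonneg _
  -- t^2 ≤ n d
  have hts : t ^ 2 ≤ n * d := by
    have := sq_sum_le_card_mul_sum_sq (s := Finset.univ) (f := fun i : Fin n => X i i)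
    simpa [ht, hd, Finset.card_univ] using this
  -- n d ≤ (n-1) F
  have hnd : (n : ℝ) * d ≤ ((n : ℝ) - 1) * F := by
    have hper : ∀ i, (n : ℝ) * X i i ^ 2 ≤ ((n : ℝ) - 1) * ∑ j, X i j ^ 2 := by
      intro i
      have h1' : X i i + ∑ j ∈ Finset.univ.erase i, X i j = 0 := by
        rw [Finset.add_sum_erase _ _ (Finset.mem_univ i)]; exact hrow i
      have h2' : X i i ^ 2 = (∑ j ∈ Finset.univ.erase i, X i j) ^ 2 := by
        have hx : X i i = -(∑ j ∈ Finset.univ.erase i, X i j) := by linarith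
        rw [hx]; ring
      have h3' := sq_sum_le_card_mul_sum_sq (s := Finset.univ.erase i)
        (f := fun j => X i j)
      have hcard : (Finset.univ.erase i).card = n - 1 := by
        rw [Finset.card_erase_of_mem (Finset.mem_univ i), Finset.card_univ, Fintype.card_fin]
      have hcast : ((n - 1 : ℕ) : ℝ) = (n : ℝ) - 1 := by
        rw [Nat.cast_sub hn]; norm_num
      have h4' : (∑ j ∈ Finset.univ.erase i, X i j ^ 2)
          = (∑ j, X i j ^ 2) - X i i ^ 2 := by
        have hx : X i i ^ 2 + ∑ j ∈ Finset.univ.erase i, X i j ^ 2 = ∑ j, X i j ^ 2 :=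
          Finset.add_sum_erase Finset.univ (fun j => X i j ^ 2) (Finset.mem_univ i)
        linarith
      rw [hcard, hcast, h4'] at h3'
      rw [h2'] at h3' ⊢
      linarith [h3']
    calc (n : ℝ) * d = ∑ i, (n : ℝ) * X i i ^ 2 := by rw [hd, Finset.mul_sum]
      _ ≤ ∑ i, ((n : ℝ) - 1) * ∑ j, X i j ^ 2 := Finset.sum_le_sum fun i _ => hper i
      _ = ((n : ℝ) - 1) * F := by rw [hF, Finset.mul_sum]
  constructor
  · rw [hSval]
    nlinarith [sq_nonneg t, mul_nonneg (Nat.cast_nonneg (α := ℝ) n) hdpos]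
  · rw [hSval]
    linarith [hts, hnd, hFpos]
end

section
/- If M is an n×n symmetric rank-r matrix whose column space U satisfies the standard coherence bound ||P_U e_i||² ≤ νr/n for all i, then for every EDG basis matrix w_α, ||P_T w_α||_F² ≤ 16νr/n, where P_T is the projection onto the tangent space at M. -/
open Matrix

set_option maxHeartbeats 1000000 in
/-- If the column space `U` of a symmetric rank-`r` matrix satisfies the standard
coherence bound `‖P_U e_i‖² ≤ νr/n` for all `i`, then every EDG basis matrix satisfies
`‖P_T w_α‖_F² ≤ 16 ν r / n`, where `P_T X = P_U X + X P_U - P_U X P_U`. -/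
theorem edg_coherence_PT_w {n r : ℕ} (ν : ℝ) (U : Matrix (Fin n) (Fin r) ℝ)
    (hU : Uᵀ * U = 1)
    (hcoh : ∀ i : Fin n, ∑ k, (U i k) ^ 2 ≤ ν * r / n)
    (α : Fin n × Fin n) (hα : α.1 < α.2) :
    (∑ i, ∑ j,
        ((U * Uᵀ * edgBasisMatrix α + edgBasisMatrix α * (U * Uᵀ)
          - U * Uᵀ * edgBasisMatrix α * (U * Uᵀ)) i j) ^ 2)
      ≤ 16 * ν * r / n := by
  obtain ⟨a, b⟩ := α
  simp only at hα ⊢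
  have hab : a ≠ b := ne_of_lt hα
  set u : Fin n → ℝ := fun i => (∑ k, U i k * U a k) - (∑ k, U i k * U b k) with hu
  set v : Fin n → ℝ := fun i => (if i = a then (1:ℝ) else 0) - (if i = b then 1 else 0) with hv
  -- orthonormality of columns
  have horth : ∀ k l, ∑ i, U i k * U i l = if k = l then (1:ℝ) else 0 := by
    intro k l
    have := congrFun (congrFun hU k) l
    simpa [Matrix.mul_apply, Matrix.transpose_apply, Matrix.one_apply] using this
  have hPP : ∀ c d : Fin n,
      ∑ i, (∑ k, U i k * U c k) * (∑ k, U i k * U d k) = ∑ k, U c k * U d k := by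
    intro c d
    calc ∑ i, (∑ k, U i k * U c k) * (∑ l, U i l * U d l)
        = ∑ i, ∑ k, ∑ l, U c k * U d l * (U i k * U i l) := by
          refine Finset.sum_congr rfl fun i _ => ?_
          rw [Finset.sum_mul_sum]
          exact Finset.sum_congr rfl fun k _ => Finset.sum_congr rfl fun l _ => by ring
      _ = ∑ k, ∑ l, U c k * U d l * (∑ i, U i k * U i l) := by
          rw [Finset.sum_comm]
          refine Finset.sum_congr rfl fun k _ => ?_
          rw [Finset.sum_comm]
          exact Finset.sum_congr rfl fun l _ => (Finset.mul_sum _ _ _).symm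
      _ = ∑ k, U c k * U d k := by
          simp_rw [horth]
          simp [mul_ite, mul_one, mul_zero, Finset.sum_ite_eq]
  -- entry formulas
  have h1 : ∀ i j, (U * Uᵀ * edgBasisMatrix (a, b)) i j = u i * v j := by
    intro i j
    simp [edgBasisMatrix, Matrix.mul_apply, Matrix.single, Matrix.transpose_apply, mul_sub,
      mul_ite, ite_and, Finset.sum_sub_distrib, Finset.sum_ite_eq, Finset.sum_ite_eq', eq_comm, hu, hv]
    split_ifs <;>
      simp [mul_add, mul_ite, mul_one, mul_zero, Finset.sum_add_distrib,
        Finset.sum_ite_eq, Finset.sum_ite_eq'] <;>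
      ring
  have h2 : ∀ i j, (edgBasisMatrix (a, b) * (U * Uᵀ)) i j = v i * u j := by
    intro i j
    simp [edgBasisMatrix, Matrix.mul_apply, Matrix.single, Matrix.transpose_apply, sub_mul,
      ite_mul, ite_and, Finset.sum_sub_distrib, Finset.sum_ite_eq, Finset.sum_ite_eq', eq_comm, hu, hv]
    split_ifs <;>
      simp [add_mul, ite_mul, one_mul, zero_mul, Finset.sum_add_distrib,
        Finset.sum_ite_eq, Finset.sum_ite_eq'] <;>
      simp [mul_comm]
  have h3 : ∀ i j, (U * Uᵀ * edgBasisMatrix (a, b) * (U * Uᵀ)) i j = u i * u j := by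
    intro i j
    rw [Matrix.mul_apply]
    simp_rw [h1]
    have : ∀ k : Fin n, u i * v k * (U * Uᵀ) k j = u i * (v k * (∑ l, U k l * U j l)) := by
      intro k; rw [Matrix.mul_apply]; simp [Matrix.transpose_apply]; ring
    simp_rw [this, ← Finset.mul_sum]
    congr 1
    simp only [hv, sub_mul, ite_mul, one_mul, zero_mul, Finset.sum_sub_distrib,
      Finset.sum_ite_eq, Finset.sum_ite_eq', Finset.mem_univ, if_true]
    rw [show (∑ l, U a l * U j l) = ∑ l, U j l * U a l from
        Finset.sum_congr rfl fun k _ => mul_comm _ _,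
      show (∑ l, U b l * U j l) = ∑ l, U j l * U b l from
        Finset.sum_congr rfl fun k _ => mul_comm _ _]
  -- rewrite the whole sum
  have hA : ∀ i j, ((U * Uᵀ * edgBasisMatrix (a, b) + edgBasisMatrix (a, b) * (U * Uᵀ)
      - U * Uᵀ * edgBasisMatrix (a, b) * (U * Uᵀ)) i j) = u i * v j + v i * u j - u i * u j := by
    intro i j
    simp [Matrix.sub_apply, Matrix.add_apply, h1 i j, h2 i j, h3 i j]
  set S := ∑ i, (u i) ^ 2 with hSdef
  set C := ∑ i, u i * v i with hCdef
  set V := ∑ i, (v i) ^ 2 with hVdef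
  have key : ∀ f g : Fin n → ℝ, (∑ i, ∑ j, f i * g j) = (∑ i, f i) * (∑ j, g j) := by
    intro f g; rw [Finset.sum_mul_sum]
  have hexpand : (∑ i, ∑ j, ((U * Uᵀ * edgBasisMatrix (a, b) + edgBasisMatrix (a, b) * (U * Uᵀ)
      - U * Uᵀ * edgBasisMatrix (a, b) * (U * Uᵀ)) i j) ^ 2)
      = S * V + V * S + S * S + (2 * C) * C + (-2 * S) * C + (-2 * C) * S := by
    calc (∑ i, ∑ j, ((U * Uᵀ * edgBasisMatrix (a, b) + edgBasisMatrix (a, b) * (U * Uᵀ)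
          - U * Uᵀ * edgBasisMatrix (a, b) * (U * Uᵀ)) i j) ^ 2)
        = ∑ i, ∑ j, ((u i)^2 * (v j)^2 + (v i)^2 * (u j)^2 + (u i)^2 * (u j)^2
            + (2 * (u i * v i)) * (u j * v j) + (-2 * (u i)^2) * (u j * v j)
            + (-2 * (u i * v i)) * (u j)^2) := by
          refine Finset.sum_congr rfl fun i _ => Finset.sum_congr rfl fun j _ => ?_
          rw [hA i j]; ring
      _ = S * V + V * S + S * S + (2 * C) * C + (-2 * S) * C + (-2 * C) * S := by
          simp only [Finset.sum_add_distrib, key]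
          rw [hSdef, hCdef, hVdef]
          simp_rw [← Finset.mul_sum]
  -- compute V
  have hV : V = 2 := by
    rw [hVdef]
    have hpt : ∀ i, (v i) ^ 2 = (if i = a then (1:ℝ) else 0) + (if i = b then 1 else 0) := by
      intro i
      by_cases h1 : i = a <;> by_cases h2 : i = b <;>
        simp [hv, h1, h2, hab, Ne.symm hab] <;> first | (exact absurd (h1.symm.trans h2) hab) | norm_num
    simp_rw [hpt]
    simp [Finset.sum_add_distrib, Finset.sum_ite_eq']
    norm_num
  -- compute C and S in closed form
  have hSform : S = (∑ k, U a k * U a k) - (∑ k, U a k * U b k)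
      - (∑ k, U b k * U a k) + (∑ k, U b k * U b k) := by
    rw [hSdef]
    have hpt : ∀ i, (u i) ^ 2 = (∑ k, U i k * U a k) * (∑ k, U i k * U a k)
        - (∑ k, U i k * U a k) * (∑ k, U i k * U b k)
        - (∑ k, U i k * U b k) * (∑ k, U i k * U a k)
        + (∑ k, U i k * U b k) * (∑ k, U i k * U b k) := by
      intro i; simp only [hu]; ring
    simp_rw [hpt, Finset.sum_add_distrib, Finset.sum_sub_distrib, hPP]
  have hCform : C = (∑ k, U a k * U a k) - (∑ k, U a k * U b k)
      - (∑ k, U b k * U a k) + (∑ k, U b k * U b k) := by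
    rw [hCdef]
    have hpt : ∀ i, u i * v i = (u i * if i = a then (1:ℝ) else 0)
        - (u i * if i = b then 1 else 0) := by intro i; simp only [hv]; ring
    simp_rw [hpt, Finset.sum_sub_distrib, mul_ite, mul_one, mul_zero,
      Finset.sum_ite_eq', Finset.mem_univ, if_true]
    simp only [hu]
    have hab1 : (∑ k, U b k * U a k) = ∑ k, U a k * U b k :=
      Finset.sum_congr rfl fun k _ => mul_comm _ _
    rw [hab1]; ring
  have hCS : C = S := by rw [hSform, hCform]
  have hS0 : (0:ℝ) ≤ S := Finset.sum_nonneg fun i _ => sq_nonneg _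
  -- coherence bounds
  have hPaa : (∑ k, U a k * U a k) ≤ ν * r / n := by
    simpa [pow_two] using hcoh a
  have hPbb : (∑ k, U b k * U b k) ≤ ν * r / n := by
    simpa [pow_two] using hcoh b
  have hpos : (0:ℝ) ≤ ν * r / n :=
    le_trans (Finset.sum_nonneg fun k _ => sq_nonneg (U a k)) (hcoh a)
  have hcs : (∑ k, U a k * U b k) ^ 2 ≤ (∑ k, (U a k) ^ 2) * (∑ k, (U b k) ^ 2) :=
    Finset.sum_mul_sq_le_sq_mul_sq _ _ _
  have haa : (∑ k, (U a k) ^ 2) = ∑ k, U a k * U a k := by simp [pow_two]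
  have hbb : (∑ k, (U b k) ^ 2) = ∑ k, U b k * U b k := by simp [pow_two]
  have hPab : -(ν * r / n) ≤ ∑ k, U a k * U b k := by
    nlinarith [Finset.sum_nonneg fun k (_ : k ∈ Finset.univ) => sq_nonneg (U a k),
      Finset.sum_nonneg fun k (_ : k ∈ Finset.univ) => sq_nonneg (U b k)]
  have hba : (∑ k, U b k * U a k) = ∑ k, U a k * U b k :=
    Finset.sum_congr rfl fun k _ => mul_comm _ _
  have hSbound : S ≤ 4 * (ν * r / n) := by
    rw [hSform, hba]; nlinarith
  rw [hexpand, hCS, hV]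
  have hgoal : 16 * ν * (r:ℝ) / (n:ℝ) = 4 * (4 * (ν * r / n)) := by ring
  rw [hgoal]
  nlinarith [sq_nonneg S, mul_self_nonneg S]
end
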